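/- For ordered rooted binary trees S and T with n internal nodes, if they have no common edge pair (e = 0), then d_R(S,T) ≥ n - 1. -/

import Mathlib

inductive BT : Type
  | leaf : BT
  | node : BT → BT → BT
deriving DecidableEq

namespace BT

/-- number of internal nodes -/
def size : BT → ℕ
  | leaf => 0
  | node l r => size l + size r + 1

/-- number of leaves -/
def nl (t : BT) : ℕ := size t + 1

/-- one (right) rotation somewhere in the tree -/
inductive Rot : BT → BT → Prop
  | root (a b c : BT) : Rot (node (node a b) c) (node a (node b c))
  | congrL {l l' : BT} (r : BT) : Rot l l' → Rot (node l r) (node l' r)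
  | congrR (l : BT) {r r' : BT} : Rot r r' → Rot (node l r) (node l r')

/-- a rotation move: a right rotation or its inverse (a left rotation) -/
def Move (s t : BT) : Prop := Rot s t ∨ Rot t s

/-- `Chain n s t`: `s` is transformed into `t` by `n` rotation moves -/
inductive Chain : ℕ → BT → BT → Prop
  | refl (t : BT) : Chain 0 t t
  | step {n : ℕ} {s u t : BT} : Move s u → Chain n u t → Chain (n + 1) s t

/-- rotation distance -/
noncomputable def dR (s t : BT) : ℕ := sInf {n | Chain n s t}

def isNode : BT → Bool
  | leaf => false
  | node _ _ => true

/-- the multiset of leaf partitions induced by internal edges, where the leaves of the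
tree are numbered from `k` on, left to right; each internal edge is recorded by the
set of leaf numbers below it. -/
def iparts : BT → ℕ → Multiset (Finset ℕ)
  | leaf, _ => 0
  | node l r, k =>
      ((if isNode l then {Finset.Ico k (k + nl l)} else 0) + iparts l k)
        + ((if isNode r then {Finset.Ico (k + nl l) (k + nl l + nl r)} else 0)
            + iparts r (k + nl l))

/-- number of common edge pairs -/
def commonEdges (s t : BT) : ℕ := ((iparts s 0) ∩ (iparts t 0)).card

/- ### auxiliary lemmas -/

lemma Rot.size_eq {s t : BT} (h : Rot s t) : size s = size t := by
  induction h with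
  | root a b c => simp [size]; omega
  | congrL r h ih => simp [size]; omega
  | congrR l h ih => simp [size]; omega

lemma Rot.isNode_left {s t : BT} (h : Rot s t) : isNode s = true := by
  cases h <;> simp [isNode]

lemma Rot.isNode_right {s t : BT} (h : Rot s t) : isNode t = true := by
  cases h <;> simp [isNode]

/-- a rotation changes exactly one induced partition -/
lemma Rot.iparts_eq {s t : BT} (h : Rot s t) (k : ℕ) :
    ∃ x y : Finset ℕ, ∃ M : Multiset (Finset ℕ),
      iparts s k = {x} + M ∧ iparts t k = {y} + M := by
  induction h generalizing k with
  | root a b c =>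
      have e1 : nl (node a b) = nl a + nl b := by simp [nl, size]; omega
      have e2 : nl (node b c) = nl b + nl c := by simp [nl, size]; omega
      have e3 : k + nl a + (nl b + nl c) = k + nl a + nl b + nl c := by omega
      have e4 : k + (nl a + nl b) = k + nl a + nl b := by omega
      refine ⟨Finset.Ico k (k + nl a + nl b), Finset.Ico (k + nl a) (k + nl a + nl b + nl c),
        ((if isNode a then ({Finset.Ico k (k + nl a)} : Multiset (Finset ℕ)) else 0) + iparts a k)
          + (((if isNode b then {Finset.Ico (k + nl a) (k + nl a + nl b)} else 0)
              + iparts b (k + nl a))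
            + ((if isNode c then {Finset.Ico (k + nl a + nl b) (k + nl a + nl b + nl c)} else 0)
              + iparts c (k + nl a + nl b))), ?_, ?_⟩
      · simp only [iparts, isNode, if_true]
        rw [e1, e4]
        abel
      · simp only [iparts, isNode, if_true]
        rw [e2, e3]
        abel
  | congrL r h ih =>
      obtain ⟨x, y, M, h1, h2⟩ := ih k
      rename_i l l'
      have hn : nl l = nl l' := by simp [nl, h.size_eq]
      refine ⟨x, y,
        {Finset.Ico k (k + nl l)} + M
          + ((if isNode r then {Finset.Ico (k + nl l) (k + nl l + nl r)} else 0)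
              + iparts r (k + nl l)), ?_, ?_⟩
      · rw [iparts, h.isNode_left, if_pos rfl, h1]; abel
      · rw [iparts, h.isNode_right, if_pos rfl, h2, ← hn]; abel
  | congrR l h ih =>
      obtain ⟨x, y, M, h1, h2⟩ := ih (k + nl l)
      rename_i r r'
      have hn : nl r = nl r' := by simp [nl, h.size_eq]
      refine ⟨x, y,
        ((if isNode l then {Finset.Ico k (k + nl l)} else 0) + iparts l k)
          + ({Finset.Ico (k + nl l) (k + nl l + nl r)} + M), ?_, ?_⟩
      · rw [iparts, h.isNode_left, if_pos rfl, h1]; abel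
      · rw [iparts, h.isNode_right, if_pos rfl, h2, ← hn]; abel

lemma size_le_card_iparts (t : BT) (k : ℕ) :
    size t ≤ (if isNode t then 1 else 0) + (iparts t k).card := by
  induction t generalizing k with
  | leaf => simp [size, iparts]
  | node l r ihl ihr =>
      have hl := ihl k
      have hr := ihr (k + nl l)
      have hcl : ((if isNode l then ({Finset.Ico k (k + nl l)} : Multiset (Finset ℕ)) else 0)).card
          = if isNode l then 1 else 0 := by
        split <;> simp
      have hcr : ((if isNode r then
            ({Finset.Ico (k + nl l) (k + nl l + nl r)} : Multiset (Finset ℕ)) else 0)).card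
          = if isNode r then 1 else 0 := by
        split <;> simp
      rw [iparts]
      simp only [Multiset.card_add, size, hcl, hcr,
        show isNode (node l r) = true from rfl, if_true]
      omega

/- chain utilities -/

lemma Chain.trans {m k : ℕ} {s u t : BT} (h1 : Chain m s u) (h2 : Chain k u t) :
    Chain (m + k) s t := by
  induction h1 with
  | refl => simpa using h2
  | step mv _ ih =>
      have h := Chain.step mv (ih h2)
      rwa [Nat.add_right_comm] at h

lemma Chain.symm {m : ℕ} {s t : BT} (h : Chain m s t) : Chain m t s := by
  induction h with
  | refl => exact Chain.refl _
  | step mv _ ih =>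
      have h1 : Chain 1 _ _ := Chain.step (Or.symm mv) (Chain.refl _)
      simpa using ih.trans h1

lemma Chain.congrR {m : ℕ} (l : BT) {r r' : BT} (h : Chain m r r') :
    Chain m (node l r) (node l r') := by
  induction h with
  | refl => exact Chain.refl _
  | step mv _ ih =>
      refine Chain.step ?_ ih
      rcases mv with mv | mv
      · exact Or.inl (Rot.congrR l mv)
      · exact Or.inr (Rot.congrR l mv)

/-- the right comb with n internal nodes -/
def comb : ℕ → BT
  | 0 => leaf
  | n + 1 => node leaf (comb n)

lemma to_comb (n : ℕ) : ∀ t : BT, size t ≤ n → ∃ m, Chain m t (comb t.size) := by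
  induction n with
  | zero =>
      intro t ht
      cases t with
      | leaf => exact ⟨0, Chain.refl _⟩
      | node l r => simp [size] at ht
  | succ n ih =>
      have key : ∀ l r : BT, size (node l r) ≤ n + 1 →
          ∃ m, Chain m (node l r) (comb (size (node l r))) := by
        intro l
        induction l with
        | leaf =>
            intro r hr
            have : size r ≤ n := by simp [size] at hr ⊢; omega
            obtain ⟨m, h⟩ := ih r this
            refine ⟨m, ?_⟩
            have hs : size (node leaf r) = size r + 1 := by simp [size]
            rw [hs, comb]
            exact Chain.congrR leaf h
        | node a b iha ihb =>
            intro r hr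
            have hsz : size (node a (node b r)) = size (node (node a b) r) := by
              simp [size]; omega
            have hle : size (node a (node b r)) ≤ n + 1 := by rw [hsz]; exact hr
            obtain ⟨m, h⟩ := iha (node b r) hle
            rw [hsz] at h
            exact ⟨m + 1, Chain.step (Or.inl (Rot.root a b r)) h⟩
      intro t ht
      cases t with
      | leaf => exact ⟨0, Chain.refl _⟩
      | node l r => exact key l r ht

/- multiset counting -/

lemma inter_add_le {α : Type*} [DecidableEq α] (A B C : Multiset α) :
    (A + B) ∩ C ≤ A ∩ C + B ∩ C := by
  rw [Multiset.le_iff_count]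
  intro a
  simp only [Multiset.count_inter, Multiset.count_add]
  omega

lemma chain_card {m : ℕ} {s T : BT} (h : Chain m s T) :
    (iparts T 0).card ≤ m + (iparts s 0 ∩ iparts T 0).card := by
  induction h with
  | refl t =>
      have h1 : iparts t 0 ≤ iparts t 0 ∩ iparts t 0 := Multiset.le_inter le_rfl le_rfl
      have := Multiset.card_le_card h1
      omega
  | step mv hc ih =>
      rename_i m s u t
      obtain ⟨x, y, M, h1, h2⟩ :
          ∃ x y M, iparts s 0 = {x} + M ∧ iparts u 0 = {y} + M := by
        rcases mv with mv | mv
        · exact mv.iparts_eq 0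
        · obtain ⟨x, y, M, h1, h2⟩ := mv.iparts_eq 0
          exact ⟨y, x, M, h2, h1⟩
      set C := iparts t 0
      have s1 : (({y} + M) ∩ C).card ≤ ({y} ∩ C + M ∩ C).card :=
        Multiset.card_le_card (inter_add_le _ _ _)
      have s2 : (({y} ∩ C : Multiset (Finset ℕ))).card ≤ ({y} : Multiset (Finset ℕ)).card :=
        Multiset.card_le_card Multiset.inter_le_left
      have s3 : ({y} : Multiset (Finset ℕ)).card = 1 := by simp
      have k1 : (iparts u 0 ∩ C).card ≤ 1 + (M ∩ C).card := by
        rw [h2]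
        rw [Multiset.card_add] at s1
        omega
      have k2 : (M ∩ C).card ≤ (iparts s 0 ∩ C).card := by
        apply Multiset.card_le_card
        apply Multiset.le_inter
        · exact le_trans Multiset.inter_le_left (by rw [h1]; exact Multiset.le_add_left _ _)
        · exact Multiset.inter_le_right
      omega

theorem dR_lower_bound_no_common_edges (n : ℕ) (S T : BT)
    (hS : S.size = n) (hT : T.size = n) (he : iparts S 0 ∩ iparts T 0 = 0) :
    n - 1 ≤ dR S T := by
  obtain ⟨m1, h1⟩ := to_comb n S (le_of_eq hS)
  obtain ⟨m2, h2⟩ := to_comb n T (le_of_eq hT)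
  rw [hS] at h1; rw [hT] at h2
  have hne : {k | Chain k S T}.Nonempty := ⟨m1 + m2, h1.trans h2.symm⟩
  have hmem : Chain (dR S T) S T := Nat.sInf_mem hne
  have h3 := chain_card hmem
  rw [he] at h3
  have h4 := size_le_card_iparts T 0
  rw [hT] at h4
  have h5 : (if isNode T then 1 else 0) ≤ 1 := by split <;> omega
  simp at h3
  omega

end BT
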